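/- For λ > 0, define p_λ(u) = 1/2 + (1/2)·sgn(u)·(1 − e^{−|u|/λ}) for u ∈ ℝ (equivalently, p_λ(u) = 1 − (1/2)e^{−u/λ} for u ≥ 0 and p_λ(u) = (1/2)e^{u/λ} for u < 0). Let ε > 0, Δ > 0, and set λ = Δ/ε. Then for all real numbers a, b with |a − b| ≤ Δ: e^{−ε} ≤ p_λ(a)/p_λ(b) ≤ e^{ε} and e^{−ε} ≤ (1 − p_λ(a))/(1 − p_λ(b)) ≤ e^{ε}. -/
import Mathlib


/-- The probability that the Laplace-noise `dp-sign` compressor with scale `λ` outputs `1` on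
input `u`: `p_λ(u) = 1/2 + (1/2) sgn(u) (1 - e^{-|u|/λ})`. -/
noncomputable def pLap (lam u : ℝ) : ℝ :=
  1 / 2 + 1 / 2 * Real.sign u * (1 - Real.exp (-|u| / lam))

lemma pLap_of_nonneg (lam u : ℝ) (h : 0 ≤ u) :
    pLap lam u = 1 - Real.exp (-u / lam) / 2 := by
  rcases eq_or_lt_of_le h with h0 | h0
  · simp [pLap, ← h0]; norm_num
  · rw [pLap, Real.sign_of_pos h0, abs_of_pos h0]; ring

lemma pLap_of_neg (lam u : ℝ) (h : u < 0) :
    pLap lam u = Real.exp (u / lam) / 2 := by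
  rw [pLap, Real.sign_of_neg h, abs_of_neg h]
  simp only [neg_neg]
  ring

lemma pLap_pos' (lam u : ℝ) (hlam : 0 < lam) : 0 < pLap lam u := by
  rcases le_or_gt 0 u with h | h
  · rw [pLap_of_nonneg lam u h]
    have : -u / lam ≤ 0 := div_nonpos_of_nonpos_of_nonneg (by linarith) hlam.le
    nlinarith [Real.exp_le_one_iff.2 this]
  · rw [pLap_of_neg lam u h]; positivity

lemma pLap_mono (lam : ℝ) (hlam : 0 < lam) {a b : ℝ} (h : b ≤ a) :
    pLap lam b ≤ pLap lam a := by
  rcases le_or_gt 0 b with hb | hb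
  · rw [pLap_of_nonneg lam b hb, pLap_of_nonneg lam a (hb.trans h)]
    have : -a / lam ≤ -b / lam := by gcongr ?_ / lam; linarith
    nlinarith [Real.exp_le_exp.2 this]
  · rcases le_or_gt 0 a with ha | ha
    · rw [pLap_of_neg lam b hb, pLap_of_nonneg lam a ha]
      have h1 : Real.exp (b / lam) ≤ 1 := Real.exp_le_one_iff.2 (by
        apply div_nonpos_of_nonpos_of_nonneg hb.le hlam.le)
      have h2 : Real.exp (-a / lam) ≤ 1 := Real.exp_le_one_iff.2 (by
        apply div_nonpos_of_nonpos_of_nonneg (by linarith) hlam.le)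
      linarith
    · rw [pLap_of_neg lam b hb, pLap_of_neg lam a ha]
      have : b / lam ≤ a / lam := by gcongr
      nlinarith [Real.exp_le_exp.2 this]

lemma pLap_ratio (lam : ℝ) (hlam : 0 < lam) {a b : ℝ} (h : b ≤ a) :
    pLap lam a ≤ Real.exp ((a - b) / lam) * pLap lam b := by
  rcases le_or_gt 0 b with hb | hb
  · -- both nonneg
    rw [pLap_of_nonneg lam b hb, pLap_of_nonneg lam a (hb.trans h)]
    set s := Real.exp ((b - a) / lam) with hs
    set t := Real.exp (-b / lam) with ht
    have hs1 : s ≤ 1 := Real.exp_le_one_iff.2 (by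
      apply div_nonpos_of_nonpos_of_nonneg (by linarith) hlam.le)
    have ht1 : t ≤ 1 := Real.exp_le_one_iff.2 (by
      apply div_nonpos_of_nonpos_of_nonneg (by linarith) hlam.le)
    have hsp : 0 < s := Real.exp_pos _
    have htp : 0 < t := Real.exp_pos _
    have hA : Real.exp ((a - b) / lam) * s = 1 := by
      rw [hs, ← Real.exp_add]; rw [show (a-b)/lam + (b-a)/lam = 0 by ring, Real.exp_zero]
    have hx : Real.exp (-a / lam) = s * t := by
      rw [hs, ht, ← Real.exp_add]; ring_nf
    rw [hx]
    have key : 0 ≤ (1 - s) * (2 - t * (1 + s)) :=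
      mul_nonneg (by linarith) (by nlinarith)
    have hApos : 0 < Real.exp ((a - b) / lam) := Real.exp_pos _
    have h6 : s * (1 - s * t / 2) ≤ 1 - t / 2 := by nlinarith
    nlinarith [mul_le_mul_of_nonneg_left h6 hApos.le]
  · rcases le_or_gt 0 a with ha | ha
    · -- a ≥ 0 > b
      rw [pLap_of_neg lam b hb, pLap_of_nonneg lam a ha]
      have h1 : Real.exp ((a - b)/lam) * Real.exp (b/lam) = Real.exp (a/lam) := by
        rw [← Real.exp_add]; ring_nf
      have h2 : Real.exp (a/lam) * Real.exp (-a/lam) = 1 := by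
        rw [← Real.exp_add, show a/lam + -a/lam = 0 by ring, Real.exp_zero]
      have h3 : 0 < Real.exp (a/lam) := Real.exp_pos _
      have h4 : 0 < Real.exp (-a/lam) := Real.exp_pos _
      have h5 : (Real.exp (a/lam) - 1)^2 ≥ 0 := sq_nonneg _
      nlinarith
    · -- both neg
      rw [pLap_of_neg lam b hb, pLap_of_neg lam a ha]
      have : Real.exp ((a - b)/lam) * Real.exp (b/lam) = Real.exp (a/lam) := by
        rw [← Real.exp_add]; ring_nf
      nlinarith

lemma pLap_key (lam : ℝ) (hlam : 0 < lam) (a b : ℝ) :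
    pLap lam a ≤ Real.exp (|a - b| / lam) * pLap lam b := by
  rcases le_or_gt b a with h | h
  · rw [abs_of_nonneg (by linarith)]; exact pLap_ratio lam hlam h
  · have h1 : pLap lam a ≤ pLap lam b := pLap_mono lam hlam h.le
    have h2 : (1:ℝ) ≤ Real.exp (|a - b| / lam) := Real.one_le_exp (by positivity)
    nlinarith [pLap_pos' lam b hlam]

lemma pLap_neg_arg (lam u : ℝ) (hlam : 0 < lam) : pLap lam (-u) = 1 - pLap lam u := by
  rcases lt_trichotomy u 0 with h | h | h
  · rw [pLap_of_neg lam u h, pLap_of_nonneg lam (-u) (by linarith)]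
    rw [neg_neg]
  · simp [h, pLap]; norm_num
  · rw [pLap_of_nonneg lam u h.le, pLap_of_neg lam (-u) (by linarith)]
    rw [neg_div]
    ring

/-- Scalar `(ε,0)`-differential privacy of the Laplace `dp-sign` compressor:
with `λ = Δ/ε`, for all `a, b` with `|a - b| ≤ Δ`, both `p_λ(a)/p_λ(b)` and
`(1 - p_λ(a))/(1 - p_λ(b))` lie in `[e^{-ε}, e^{ε}]`. -/
theorem stmt_14 (ε Δ : ℝ) (hε : 0 < ε) (hΔ : 0 < Δ)
    (lam : ℝ) (hlam : lam = Δ / ε)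
    (a b : ℝ) (hab : |a - b| ≤ Δ) :
    (Real.exp (-ε) ≤ pLap lam a / pLap lam b ∧ pLap lam a / pLap lam b ≤ Real.exp ε) ∧
    (Real.exp (-ε) ≤ (1 - pLap lam a) / (1 - pLap lam b) ∧
      (1 - pLap lam a) / (1 - pLap lam b) ≤ Real.exp ε) := by
  have hlam0 : 0 < lam := by rw [hlam]; positivity
  have hle : ∀ x y : ℝ, |x - y| ≤ Δ → pLap lam x ≤ Real.exp ε * pLap lam y := by
    intro x y h
    have h1 := pLap_key lam hlam0 x y
    have h2 : |x - y| / lam ≤ ε := by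
      rw [div_le_iff₀ hlam0]
      calc |x - y| ≤ Δ := h
        _ = ε * lam := by rw [hlam]; field_simp
    have h3 : Real.exp (|x - y| / lam) ≤ Real.exp ε := Real.exp_le_exp.2 h2
    nlinarith [pLap_pos' lam y hlam0]
  have main : ∀ x y : ℝ, |x - y| ≤ Δ →
      Real.exp (-ε) ≤ pLap lam x / pLap lam y ∧ pLap lam x / pLap lam y ≤ Real.exp ε := by
    intro x y h
    have hy := pLap_pos' lam y hlam0
    have hx := pLap_pos' lam x hlam0
    have h' : |y - x| ≤ Δ := by rw [abs_sub_comm]; exact h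
    constructor
    · rw [le_div_iff₀ hy]
      have := hle y x h'
      have he : Real.exp (-ε) * Real.exp ε = 1 := by
        rw [← Real.exp_add]; simp
      have hep : 0 < Real.exp ε := Real.exp_pos _
      have hem : 0 < Real.exp (-ε) := Real.exp_pos _
      nlinarith
    · rw [div_le_iff₀ hy]
      exact hle x y h
  refine ⟨main a b hab, ?_⟩
  have hna : 1 - pLap lam a = pLap lam (-a) := (pLap_neg_arg lam a hlam0).symm
  have hnb : 1 - pLap lam b = pLap lam (-b) := (pLap_neg_arg lam b hlam0).symm
  rw [hna, hnb]
  exact main (-a) (-b) (by rw [show -a - -b = -(a-b) by ring, abs_neg]; exact hab)
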